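/- (No-Go Theorem for a homogeneous sub-population.) Let α, β, γ, t_p, θ_st be real constants with t_p > 0, and let ⟨θ⟩ : ℝ → ℝ be differentiable and ⟨P⟩ : ℝ → ℝ be continuous on [0, t_p], satisfying α · d⟨θ⟩/dt (t) = -⟨P⟩(t) + β·(⟨θ⟩(t) - γ) for all t ∈ [0, t_p]. Assume ⟨θ⟩(t_p) = ⟨θ⟩(0) and that the time average of ⟨θ⟩ over the protocol equals the steady-state average temperature: ∫₀^{t_p} ⟨θ⟩(t) dt = θ_st · t_p. Then the total consumed energy W_tot = ∫₀^{t_p} ⟨P⟩(t) dt equals the steady-state energy W_st(t_p) = β·(θ_st - γ)·t_p; i.e., the excess energy W_tot - W_st(t_p) is zero. -/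
import Mathlib


/-- No-Go Theorem for a homogeneous sub-population of TCLs: under SP-1, if the
average temperature returns to its initial value after time `tp` and the time
average of the temperature equals the steady-state value `θst`, then the total
consumed energy equals the steady-state energy `β * (θst - γ) * tp`, i.e. the
excess energy is zero. -/
theorem no_go_theorem
    (α β γ tp θst : ℝ) (htp : 0 < tp)
    (θ P : ℝ → ℝ)
    (hθ : ∀ t ∈ Set.Icc (0:ℝ) tp, DifferentiableAt ℝ θ t)
    (hP : ContinuousOn P (Set.Icc (0:ℝ) tp))
    (hdyn : ∀ t ∈ Set.Icc (0:ℝ) tp, α * deriv θ t = -P t + β * (θ t - γ))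
    (hret : θ tp = θ 0)
    (havg : ∫ t in (0:ℝ)..tp, θ t = θst * tp) :
    ∫ t in (0:ℝ)..tp, P t = β * (θst - γ) * tp := by
  have huIcc : Set.uIcc (0:ℝ) tp = Set.Icc 0 tp := Set.uIcc_of_le htp.le
  have hθc : ContinuousOn θ (Set.Icc 0 tp) :=
    fun t ht => (hθ t ht).continuousAt.continuousWithinAt
  have hint_θ : IntervalIntegrable θ MeasureTheory.volume 0 tp := by
    apply ContinuousOn.intervalIntegrable; rwa [huIcc]
  have hint_c : IntervalIntegrable (fun _ : ℝ => γ) MeasureTheory.volume 0 tp :=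
    intervalIntegrable_const
  have hθγ : ∫ t in (0:ℝ)..tp, (θ t - γ) = θst * tp - γ * tp := by
    rw [intervalIntegral.integral_sub hint_θ hint_c, havg,
      intervalIntegral.integral_const]
    simp [smul_eq_mul]; ring
  rcases eq_or_ne α 0 with h0 | h0
  · have hP' : ∀ t ∈ Set.uIcc (0:ℝ) tp, P t = β * (θ t - γ) := by
      intro t ht
      have := hdyn t (huIcc ▸ ht)
      rw [h0] at this; linarith
    rw [intervalIntegral.integral_congr hP', intervalIntegral.integral_const_mul, hθγ]
    ring
  · have hderiv_eq : ∀ t ∈ Set.Icc (0:ℝ) tp,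
        deriv θ t = (-P t + β * (θ t - γ)) / α := by
      intro t ht
      have := hdyn t ht
      field_simp
      linarith
    have hdc : ContinuousOn (deriv θ) (Set.Icc 0 tp) := by
      apply ContinuousOn.congr (f := fun t => (-P t + β * (θ t - γ)) / α) _ hderiv_eq
      exact (hP.neg.add (continuousOn_const.mul (hθc.sub continuousOn_const))).div_const α
    have hint_d : IntervalIntegrable (deriv θ) MeasureTheory.volume 0 tp := by
      apply ContinuousOn.intervalIntegrable; rwa [huIcc]
    have hftc : ∫ t in (0:ℝ)..tp, deriv θ t = θ tp - θ 0 :=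
      intervalIntegral.integral_deriv_eq_sub (fun t ht => hθ t (huIcc ▸ ht)) hint_d
    have hPeq : ∀ t ∈ Set.uIcc (0:ℝ) tp,
        P t = β * (θ t - γ) - α * deriv θ t := by
      intro t ht
      have := hdyn t (huIcc ▸ ht)
      linarith
    have hint1 : IntervalIntegrable (fun t => β * (θ t - γ)) MeasureTheory.volume 0 tp :=
      (hint_θ.sub hint_c).const_mul β
    rw [intervalIntegral.integral_congr hPeq,
      intervalIntegral.integral_sub hint1 (hint_d.const_mul α),
      intervalIntegral.integral_const_mul, intervalIntegral.integral_const_mul,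
      hθγ, hftc, hret]
    ring
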